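/- The function f(x) = (3x/sin x + cos x − 4)/(x³·sin x) is increasing on (0, π/2), with limit 1/10 as x → 0⁺ and limit (12π − 32)/π³ as x → π/2⁻. -/

import Mathlib

open Real Filter Set


private lemma nonneg_of_deriv {f f' : ℝ → ℝ} (hd : ∀ x, HasDerivAt f (f' x) x)
    (h0 : f 0 = 0) (hf' : ∀ x, 0 ≤ x → 0 ≤ f' x) : ∀ x, 0 ≤ x → 0 ≤ f x := by
  intro x hx
  have hmono : MonotoneOn f (Set.Ici 0) := by
    apply monotoneOn_of_deriv_nonneg (convex_Ici 0)
    · exact fun y _ => (hd y).continuousAt.continuousWithinAt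
    · intro y hy
      exact (hd y).differentiableAt.differentiableWithinAt
    · intro y hy
      rw [interior_Ici] at hy
      rw [(hd y).deriv]
      exact hf' y (le_of_lt hy)
  have := hmono Set.self_mem_Ici (Set.mem_Ici.2 hx) hx
  linarith

private lemma tay_s1 : ∀ x : ℝ, 0 ≤ x → Real.sin x ≤ x := fun x hx => Real.sin_le hx

private lemma tay_c1 : ∀ x : ℝ, 0 ≤ x → 1 - x^2/2 ≤ Real.cos x := by
  have h := nonneg_of_deriv (f := fun y => Real.cos y - (1 - y^2/2))
    (f' := fun y => y - Real.sin y) ?_ (by norm_num) ?_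
  · intro x hx; linarith [h x hx]
  · intro y
    have h1 := (Real.hasDerivAt_cos y).sub
      ((hasDerivAt_const y (1:ℝ)).sub ((hasDerivAt_pow 2 y).div_const 2))
    refine h1.congr_deriv ?_
    push_cast; ring
  · intro y hy; linarith [tay_s1 y hy]

private lemma tay_s2 : ∀ x : ℝ, 0 ≤ x → x - x^3/6 ≤ Real.sin x := by
  have h := nonneg_of_deriv (f := fun y => Real.sin y - (y - y^3/6))
    (f' := fun y => Real.cos y - (1 - y^2/2)) ?_ (by norm_num) ?_
  · intro x hx; linarith [h x hx]
  · intro y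
    have h1 := (Real.hasDerivAt_sin y).sub
      ((hasDerivAt_id y).sub ((hasDerivAt_pow 3 y).div_const 6))
    refine h1.congr_deriv ?_
    push_cast; ring
  · intro y hy; linarith [tay_c1 y hy]

private lemma tay_c2 : ∀ x : ℝ, 0 ≤ x → Real.cos x ≤ 1 - x^2/2 + x^4/24 := by
  have h := nonneg_of_deriv (f := fun y => (1 - y^2/2 + y^4/24) - Real.cos y)
    (f' := fun y => Real.sin y - (y - y^3/6)) ?_ (by norm_num) ?_
  · intro x hx; linarith [h x hx]
  · intro y
    have h1 := (((hasDerivAt_const y (1:ℝ)).sub ((hasDerivAt_pow 2 y).div_const 2)).add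
      ((hasDerivAt_pow 4 y).div_const 24)).sub (Real.hasDerivAt_cos y)
    refine h1.congr_deriv ?_
    push_cast; ring
  · intro y hy; linarith [tay_s2 y hy]

private lemma tay_s3 : ∀ x : ℝ, 0 ≤ x → Real.sin x ≤ x - x^3/6 + x^5/120 := by
  have h := nonneg_of_deriv (f := fun y => (y - y^3/6 + y^5/120) - Real.sin y)
    (f' := fun y => (1 - y^2/2 + y^4/24) - Real.cos y) ?_ (by norm_num) ?_
  · intro x hx; linarith [h x hx]
  · intro y
    have h1 := (((hasDerivAt_id y).sub ((hasDerivAt_pow 3 y).div_const 6)).add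
      ((hasDerivAt_pow 5 y).div_const 120)).sub (Real.hasDerivAt_sin y)
    refine h1.congr_deriv ?_
    push_cast; ring
  · intro y hy; linarith [tay_c2 y hy]

private lemma tay_c3 : ∀ x : ℝ, 0 ≤ x → 1 - x^2/2 + x^4/24 - x^6/720 ≤ Real.cos x := by
  have h := nonneg_of_deriv (f := fun y => Real.cos y - (1 - y^2/2 + y^4/24 - y^6/720))
    (f' := fun y => (y - y^3/6 + y^5/120) - Real.sin y) ?_ (by norm_num) ?_
  · intro x hx; linarith [h x hx]
  · intro y
    have h1 := (Real.hasDerivAt_cos y).sub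
      ((((hasDerivAt_const y (1:ℝ)).sub ((hasDerivAt_pow 2 y).div_const 2)).add
      ((hasDerivAt_pow 4 y).div_const 24)).sub ((hasDerivAt_pow 6 y).div_const 720))
    refine h1.congr_deriv ?_
    push_cast; ring
  · intro y hy; linarith [tay_s3 y hy]

private lemma tay_s4 : ∀ x : ℝ, 0 ≤ x → x - x^3/6 + x^5/120 - x^7/5040 ≤ Real.sin x := by
  have h := nonneg_of_deriv (f := fun y => Real.sin y - (y - y^3/6 + y^5/120 - y^7/5040))
    (f' := fun y => Real.cos y - (1 - y^2/2 + y^4/24 - y^6/720)) ?_ (by norm_num) ?_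
  · intro x hx; linarith [h x hx]
  · intro y
    have h1 := (Real.hasDerivAt_sin y).sub
      ((((hasDerivAt_id y).sub ((hasDerivAt_pow 3 y).div_const 6)).add
      ((hasDerivAt_pow 5 y).div_const 120)).sub ((hasDerivAt_pow 7 y).div_const 5040))
    refine h1.congr_deriv ?_
    push_cast; ring
  · intro y hy; linarith [tay_c3 y hy]

private lemma tay_c4 : ∀ x : ℝ, 0 ≤ x →
    Real.cos x ≤ 1 - x^2/2 + x^4/24 - x^6/720 + x^8/40320 := by
  have h := nonneg_of_deriv
    (f := fun y => (1 - y^2/2 + y^4/24 - y^6/720 + y^8/40320) - Real.cos y)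
    (f' := fun y => Real.sin y - (y - y^3/6 + y^5/120 - y^7/5040)) ?_ (by norm_num) ?_
  · intro x hx; linarith [h x hx]
  · intro y
    have h1 := (((((hasDerivAt_const y (1:ℝ)).sub ((hasDerivAt_pow 2 y).div_const 2)).add
      ((hasDerivAt_pow 4 y).div_const 24)).sub ((hasDerivAt_pow 6 y).div_const 720)).add
      ((hasDerivAt_pow 8 y).div_const 40320)).sub (Real.hasDerivAt_cos y)
    refine h1.congr_deriv ?_
    push_cast; ring
  · intro y hy; linarith [tay_s4 y hy]

set_option maxHeartbeats 2000000 in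
private lemma g_pos {x : ℝ} (h0 : 0 < x) (h2 : x < π/2) :
    0 < 12*Real.sin x^2 - 7*x*Real.sin x + 4*x*Real.sin x*Real.cos x
      - 6*x^2*Real.cos x - 3*Real.sin x^2*Real.cos x := by
  have hx158 : x < 1.5708 := by
    have := Real.pi_lt_d6; linarith
  have hs0 : 0 < Real.sin x := Real.sin_pos_of_pos_of_lt_pi h0
    (by linarith [Real.pi_gt_three])
  have hx2 : x^2 < 2.468 := by nlinarith
  have hx4 : x^4 < 6.1 := by nlinarith
  set s := Real.sin x with hs
  set c := Real.cos x with hc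
  have hsx : s ≤ x := tay_s1 x h0.le
  have hslo : x - x^3/6 + x^5/120 - x^7/5040 ≤ s := tay_s4 x h0.le
  have hshi : s ≤ x - x^3/6 + x^5/120 := tay_s3 x h0.le
  have hchi : c ≤ 1 - x^2/2 + x^4/24 - x^6/720 + x^8/40320 := tay_c4 x h0.le
  -- B := 4xs - 6x² - 3s² ≤ 0
  have hB : 4*x*s - 6*x^2 - 3*s^2 ≤ 0 := by nlinarith [mul_nonneg h0.le (sub_nonneg.2 hsx), sq_nonneg s]
  -- c*B ≥ bhi*B
  have h1 : (1 - x^2/2 + x^4/24 - x^6/720 + x^8/40320)*(4*x*s - 6*x^2 - 3*s^2)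
      ≤ c*(4*x*s - 6*x^2 - 3*s^2) := mul_le_mul_of_nonpos_right hchi hB
  -- bhi ≤ 4 (so 12 - 3*bhi ≥ 0)
  have hbhi4 : (1 - x^2/2 + x^4/24 - x^6/720 + x^8/40320) ≤ 4 := by nlinarith [sq_nonneg x, sq_nonneg (x^2), sq_nonneg (x^3), sq_nonneg (x^4)]
  -- R(x) > 0 :  (12-3*bhi)*2*slo + x*(4*bhi-7) > 0
  have hR : 0 < (12 - 3*(1 - x^2/2 + x^4/24 - x^6/720 + x^8/40320))
      * (2*(x - x^3/6 + x^5/120 - x^7/5040))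
      + x*(4*(1 - x^2/2 + x^4/24 - x^6/720 + x^8/40320) - 7) := by
    have e1 : (0:ℝ) < 15 - 2*x^2 - 13/30*x^4 := by linarith
    have e2 : (0:ℝ) ≤ 83/1260 - 83/20160*x^2 := by linarith
    have e3 : (0:ℝ) ≤ 29/201600 - 1/345600*x^2 := by linarith
    nlinarith [mul_pos h0 e1, mul_nonneg (pow_pos h0 7).le e2,
      mul_nonneg (pow_pos h0 11).le e3, pow_pos h0 15]
  -- factor2 ≥ R via s ≥ slo
  have h12b : (0:ℝ) ≤ 12 - 3*(1 - x^2/2 + x^4/24 - x^6/720 + x^8/40320) := by linarith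
  have hfac2 : 0 ≤ (12 - 3*(1 - x^2/2 + x^4/24 - x^6/720 + x^8/40320))
      * (s + (x - x^3/6 + x^5/120 - x^7/5040))
      + x*(4*(1 - x^2/2 + x^4/24 - x^6/720 + x^8/40320) - 7) := by
    nlinarith [mul_nonneg h12b (sub_nonneg.2 hslo)]
  -- P(x) > 0
  have hP : 0 < (12 - 3*(1 - x^2/2 + x^4/24 - x^6/720 + x^8/40320))
      * (x - x^3/6 + x^5/120 - x^7/5040)^2
      + x*(4*(1 - x^2/2 + x^4/24 - x^6/720 + x^8/40320) - 7)*(x - x^3/6 + x^5/120 - x^7/5040)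
      - 6*x^2*(1 - x^2/2 + x^4/24 - x^6/720 + x^8/40320) := by
    have e1 : (0:ℝ) < 3/70 - 4777/604800*x^2 := by linarith
    have e2 : (0:ℝ) ≤ 23/33600 - 1837/50803200*x^2 := by linarith
    have e3 : (0:ℝ) ≤ 13/10368000 - 13/451584000*x^2 := by linarith
    have e4 : (0:ℝ) ≤ 1/2438553600 - 1/341397504000*x^2 := by linarith
    nlinarith [mul_pos (pow_pos h0 8) e1, mul_nonneg (pow_pos h0 12).le e2,
      mul_nonneg (pow_pos h0 16).le e3, mul_nonneg (pow_pos h0 20).le e4]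
  -- assemble
  nlinarith [h1, mul_nonneg (sub_nonneg.2 hslo) hfac2, hP]

private lemma hasDerivAt_h {x : ℝ} (hx0 : x ≠ 0) (hs0 : Real.sin x ≠ 0) :
    HasDerivAt (fun y : ℝ => (3*y + Real.sin y * Real.cos y - 4*Real.sin y) / (y^3 * Real.sin y^2))
      (((3 + (Real.cos x * Real.cos x - Real.sin x * Real.sin x) - 4*Real.cos x) * (x^3 * Real.sin x^2)
        - (3*x + Real.sin x * Real.cos x - 4*Real.sin x)
          * (3*x^2 * Real.sin x^2 + x^3 * (2*Real.sin x*Real.cos x)))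
        / (x^3 * Real.sin x^2)^2) x := by
  have hden : x^3 * Real.sin x^2 ≠ 0 := by
    exact mul_ne_zero (pow_ne_zero _ hx0) (pow_ne_zero _ hs0)
  have hN : HasDerivAt (fun y : ℝ => 3*y + Real.sin y * Real.cos y - 4*Real.sin y)
      (3 + (Real.cos x * Real.cos x - Real.sin x * Real.sin x) - 4*Real.cos x) x := by
    have h1 := ((hasDerivAt_id x).const_mul 3).add
      ((Real.hasDerivAt_sin x).mul (Real.hasDerivAt_cos x))
    have h2 := h1.sub ((Real.hasDerivAt_sin x).const_mul 4)
    refine h2.congr_deriv ?_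
    ring
  have hD : HasDerivAt (fun y : ℝ => y^3 * Real.sin y^2)
      (3*x^2 * Real.sin x^2 + x^3 * (2*Real.sin x*Real.cos x)) x := by
    have h1 := (hasDerivAt_pow 3 x).mul ((Real.hasDerivAt_sin x).pow 2)
    refine h1.congr_deriv ?_
    push_cast; simp only [Pi.pow_apply]; ring
  exact hN.div hD hden

private lemma mono_h : StrictMonoOn
    (fun y : ℝ => (3*y + Real.sin y * Real.cos y - 4*Real.sin y) / (y^3 * Real.sin y^2))
    (Set.Ioo 0 (π/2)) := by
  apply strictMonoOn_of_deriv_pos (convex_Ioo 0 (π/2))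
  · intro y hy
    have hy0 : (0:ℝ) < y := hy.1
    have hs : 0 < Real.sin y := Real.sin_pos_of_pos_of_lt_pi hy0
      (by linarith [hy.2, Real.pi_pos])
    exact (hasDerivAt_h hy0.ne' hs.ne').continuousAt.continuousWithinAt
  · intro y hy
    rw [interior_Ioo] at hy
    have hy0 : (0:ℝ) < y := hy.1
    have hs : 0 < Real.sin y := Real.sin_pos_of_pos_of_lt_pi hy0
      (by linarith [hy.2, Real.pi_pos])
    rw [(hasDerivAt_h hy0.ne' hs.ne').deriv]
    apply div_pos
    · have hg := g_pos hy0 hy.2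
      have pyth := Real.sin_sq_add_cos_sq y
      have key : (3 + (Real.cos y * Real.cos y - Real.sin y * Real.sin y) - 4*Real.cos y) * (y^3 * Real.sin y^2)
          - (3*y + Real.sin y * Real.cos y - 4*Real.sin y)
            * (3*y^2 * Real.sin y^2 + y^3 * (2*Real.sin y*Real.cos y))
          = y^2 * Real.sin y * (12*Real.sin y^2 - 7*y*Real.sin y + 4*y*Real.sin y*Real.cos y
            - 6*y^2*Real.cos y - 3*Real.sin y^2*Real.cos y)
            - y^3 * Real.sin y^2 * ((Real.sin y^2 + Real.cos y^2) - 1) := by ring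
      rw [key, pyth]
      have := mul_pos (mul_pos (pow_pos hy0 2) hs) hg
      simpa using this
    · positivity


private lemma lim_pi2 : Tendsto
    (fun x : ℝ => (3 * x / Real.sin x + Real.cos x - 4) / (x ^ 3 * Real.sin x))
    (nhdsWithin (π / 2) (Set.Iio (π / 2))) (nhds ((12 * π - 32) / π ^ 3)) := by
  have hs : Real.sin (π/2) = 1 := Real.sin_pi_div_two
  have hca : ContinuousAt (fun x : ℝ => (3 * x / Real.sin x + Real.cos x - 4) / (x ^ 3 * Real.sin x)) (π/2) := by
    apply ContinuousAt.div
    · exact (((continuousAt_const.mul continuousAt_id).div Real.continuous_sin.continuousAt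
        (by rw [hs]; norm_num)).add Real.continuous_cos.continuousAt).sub continuousAt_const
    · exact (continuousAt_pow _ _).mul Real.continuous_sin.continuousAt
    · rw [hs]
      have := Real.pi_pos
      positivity
  have hval : (3 * (π/2) / Real.sin (π/2) + Real.cos (π/2) - 4) / ((π/2) ^ 3 * Real.sin (π/2))
      = (12 * π - 32) / π ^ 3 := by
    rw [hs, Real.cos_pi_div_two]
    have hpi : π ≠ 0 := Real.pi_ne_zero
    field_simp
    ring
  have h2 : Tendsto (fun x : ℝ => (3 * x / Real.sin x + Real.cos x - 4) / (x ^ 3 * Real.sin x))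
      (nhdsWithin (π/2) (Set.Iio (π/2)))
      (nhds ((3 * (π/2) / Real.sin (π/2) + Real.cos (π/2) - 4) / ((π/2) ^ 3 * Real.sin (π/2)))) :=
    hca.continuousWithinAt
  rw [hval] at h2
  exact h2

-- limit at 0
private lemma lim_zero : Tendsto
    (fun x : ℝ => (3 * x / Real.sin x + Real.cos x - 4) / (x ^ 3 * Real.sin x))
    (nhdsWithin 0 (Set.Ioi 0)) (nhds (1 / 10)) := by
  -- L'Hopital chain for N/x^5
  set N0 : ℝ → ℝ := fun x => 3*x + Real.sin x * Real.cos x - 4*Real.sin x with hN0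
  set N1 : ℝ → ℝ := fun x => 3 + (Real.cos x * Real.cos x - Real.sin x * Real.sin x) - 4*Real.cos x with hN1
  set N2 : ℝ → ℝ := fun x => -4*Real.sin x * Real.cos x + 4*Real.sin x with hN2
  set N3 : ℝ → ℝ := fun x => -4*(Real.cos x * Real.cos x - Real.sin x * Real.sin x) + 4*Real.cos x with hN3
  set N4 : ℝ → ℝ := fun x => 16*Real.sin x * Real.cos x - 4*Real.sin x with hN4
  set N5 : ℝ → ℝ := fun x => 16*(Real.cos x * Real.cos x - Real.sin x * Real.sin x) - 4*Real.cos x with hN5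
  have dN0 : ∀ x : ℝ, HasDerivAt N0 (N1 x) x := by
    intro x
    have h := (((hasDerivAt_id x).const_mul 3).add
      ((Real.hasDerivAt_sin x).mul (Real.hasDerivAt_cos x))).sub ((Real.hasDerivAt_sin x).const_mul 4)
    refine h.congr_deriv ?_; simp [hN1]; ring
  have dN1 : ∀ x : ℝ, HasDerivAt N1 (N2 x) x := by
    intro x
    have h := ((hasDerivAt_const x (3:ℝ)).add
      (((Real.hasDerivAt_cos x).mul (Real.hasDerivAt_cos x)).sub
        ((Real.hasDerivAt_sin x).mul (Real.hasDerivAt_sin x)))).sub ((Real.hasDerivAt_cos x).const_mul 4)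
    refine h.congr_deriv ?_; simp [hN2]; ring
  have dN2 : ∀ x : ℝ, HasDerivAt N2 (N3 x) x := by
    intro x
    have h := (((Real.hasDerivAt_sin x).const_mul (-4)).mul (Real.hasDerivAt_cos x)).add
      ((Real.hasDerivAt_sin x).const_mul 4)
    refine h.congr_deriv ?_; simp [hN3]; ring
  have dN3 : ∀ x : ℝ, HasDerivAt N3 (N4 x) x := by
    intro x
    have h := ((((Real.hasDerivAt_cos x).mul (Real.hasDerivAt_cos x)).sub
      ((Real.hasDerivAt_sin x).mul (Real.hasDerivAt_sin x))).const_mul (-4)).add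
      ((Real.hasDerivAt_cos x).const_mul 4)
    refine h.congr_deriv ?_; simp [hN4]; ring
  have dN4 : ∀ x : ℝ, HasDerivAt N4 (N5 x) x := by
    intro x
    have h := (((Real.hasDerivAt_sin x).const_mul 16).mul (Real.hasDerivAt_cos x)).sub
      ((Real.hasDerivAt_sin x).const_mul 4)
    refine h.congr_deriv ?_; simp [hN5]; ring
  have cN : ∀ k : ℕ, True := fun _ => trivial
  -- continuity-based zero limits
  have tendN : ∀ (f : ℝ → ℝ), Continuous f → f 0 = 0 → Tendsto f (nhdsWithin 0 (Set.Ioi 0)) (nhds 0) := by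
    intro f hf h0
    have := hf.continuousAt.tendsto (x := (0:ℝ))
    rw [h0] at this
    exact this.mono_left nhdsWithin_le_nhds
  have contN0 : Continuous N0 := by fun_prop
  have contN1 : Continuous N1 := by fun_prop
  have contN2 : Continuous N2 := by fun_prop
  have contN3 : Continuous N3 := by fun_prop
  have contN4 : Continuous N4 := by fun_prop
  have contN5 : Continuous N5 := by fun_prop
  -- Level 5: N5/120 → 1/10
  have T5 : Tendsto (fun x => N5 x / 120) (nhdsWithin 0 (Set.Ioi 0)) (nhds (1/10)) := by
    have : Tendsto (fun x => N5 x / 120) (nhds 0) (nhds (N5 0 / 120)) :=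
      (contN5.div_const 120).continuousAt.tendsto
    have h0 : N5 0 / 120 = 1/10 := by simp [hN5]; norm_num
    rw [h0] at this
    exact this.mono_left nhdsWithin_le_nhds
  have T4 : Tendsto (fun x => N4 x / (120*x)) (nhdsWithin 0 (Set.Ioi 0)) (nhds (1/10)) := by
    apply HasDerivAt.lhopital_zero_right_on_Ioo (b := 1) one_pos
      (fun x _ => dN4 x) (fun x _ => by simpa using (hasDerivAt_id x).const_mul (120:ℝ))
      (fun x hx => ne_of_gt (by have := hx.1; positivity))
      (tendN N4 contN4 (by simp [hN4])) (tendN _ (by fun_prop) (by simp))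
    simpa using T5
  have T3 : Tendsto (fun x => N3 x / (60*x^2)) (nhdsWithin 0 (Set.Ioi 0)) (nhds (1/10)) := by
    apply HasDerivAt.lhopital_zero_right_on_Ioo (b := 1) one_pos
      (fun x _ => dN3 x) (f' := N4) (g' := fun x => 120*x)
      (fun x _ => by
        have h := (hasDerivAt_pow 2 x).const_mul (60:ℝ)
        refine h.congr_deriv ?_; push_cast; ring)
      (fun x hx => ne_of_gt (by have := hx.1; positivity))
      (tendN N3 contN3 (by simp [hN3])) (tendN _ (by fun_prop) (by simp))
    exact T4
  have T2 : Tendsto (fun x => N2 x / (20*x^3)) (nhdsWithin 0 (Set.Ioi 0)) (nhds (1/10)) := by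
    apply HasDerivAt.lhopital_zero_right_on_Ioo (b := 1) one_pos
      (fun x _ => dN2 x) (f' := N3) (g' := fun x => 60*x^2)
      (fun x _ => by
        have h := (hasDerivAt_pow 3 x).const_mul (20:ℝ)
        refine h.congr_deriv ?_; push_cast; ring)
      (fun x hx => ne_of_gt (by have := hx.1; positivity))
      (tendN N2 contN2 (by simp [hN2])) (tendN _ (by fun_prop) (by simp))
    exact T3
  have T1 : Tendsto (fun x => N1 x / (5*x^4)) (nhdsWithin 0 (Set.Ioi 0)) (nhds (1/10)) := by
    apply HasDerivAt.lhopital_zero_right_on_Ioo (b := 1) one_pos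
      (fun x _ => dN1 x) (f' := N2) (g' := fun x => 20*x^3)
      (fun x _ => by
        have h := (hasDerivAt_pow 4 x).const_mul (5:ℝ)
        refine h.congr_deriv ?_; push_cast; ring)
      (fun x hx => ne_of_gt (by have := hx.1; positivity))
      (tendN N1 contN1 (by simp [hN1]; norm_num)) (tendN _ (by fun_prop) (by simp))
    exact T2
  have T0 : Tendsto (fun x => N0 x / x^5) (nhdsWithin 0 (Set.Ioi 0)) (nhds (1/10)) := by
    apply HasDerivAt.lhopital_zero_right_on_Ioo (b := 1) one_pos
      (fun x _ => dN0 x) (f' := N1) (g' := fun x => 5*x^4)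
      (fun x _ => by
        have h := hasDerivAt_pow 5 x
        refine h.congr_deriv ?_; norm_num)
      (fun x hx => ne_of_gt (by have := hx.1; positivity))
      (tendN N0 contN0 (by simp [hN0])) (tendN _ (by fun_prop) (by simp))
    exact T1
  -- sin x / x → 1
  have hsin : Tendsto (fun x : ℝ => Real.sin x / x) (nhdsWithin 0 (Set.Ioi 0)) (nhds 1) := by
    have h := Real.hasDerivAt_sin 0
    rw [hasDerivAt_iff_tendsto_slope] at h
    rw [Real.cos_zero] at h
    have h2 : Tendsto (slope Real.sin 0) (nhdsWithin 0 (Set.Ioi 0)) (nhds 1) :=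
      h.mono_left (nhdsWithin_mono _ (fun y hy => by
        simp only [Set.mem_compl_iff, Set.mem_singleton_iff]
        exact ne_of_gt hy))
    refine h2.congr (fun y => ?_)
    simp [slope_def_field]
  have hxsin : Tendsto (fun x : ℝ => x / Real.sin x) (nhdsWithin 0 (Set.Ioi 0)) (nhds 1) := by
    have := hsin.inv₀ one_ne_zero
    simp only [one_div, inv_div] at this
    simpa using this
  have main : Tendsto (fun x : ℝ => (N0 x / x^5) * ((x / Real.sin x) * (x / Real.sin x)))
      (nhdsWithin 0 (Set.Ioi 0)) (nhds (1/10)) := by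
    have := T0.mul (hxsin.mul hxsin)
    simpa using this
  apply main.congr'
  filter_upwards [Ioo_mem_nhdsGT_of_mem (by norm_num : (0:ℝ) ∈ Set.Ico 0 1)] with x hx
  have hx0 : (0:ℝ) < x := hx.1
  have hs : 0 < Real.sin x := Real.sin_pos_of_pos_of_lt_pi hx0
    (by linarith [hx.2, Real.pi_gt_three])
  rw [hN0]
  field_simp


theorem cusa_ratio_monotone :
    MonotoneOn
      (fun x : ℝ => (3 * x / Real.sin x + Real.cos x - 4) / (x ^ 3 * Real.sin x))
      (Set.Ioo 0 (π / 2)) ∧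
    Tendsto
      (fun x : ℝ => (3 * x / Real.sin x + Real.cos x - 4) / (x ^ 3 * Real.sin x))
      (nhdsWithin 0 (Set.Ioi 0)) (nhds (1 / 10)) ∧
    Tendsto
      (fun x : ℝ => (3 * x / Real.sin x + Real.cos x - 4) / (x ^ 3 * Real.sin x))
      (nhdsWithin (π / 2) (Set.Iio (π / 2))) (nhds ((12 * π - 32) / π ^ 3)) := by
  refine ⟨?_, lim_zero, lim_pi2⟩
  have key := mono_h.monotoneOn
  intro a ha b hb hab
  have eq : ∀ y ∈ Set.Ioo (0:ℝ) (π/2),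
      (3 * y / Real.sin y + Real.cos y - 4) / (y ^ 3 * Real.sin y)
        = (3*y + Real.sin y * Real.cos y - 4*Real.sin y) / (y^3 * Real.sin y^2) := by
    intro y hy
    have hy0 : (0:ℝ) < y := hy.1
    have hs : 0 < Real.sin y := Real.sin_pos_of_pos_of_lt_pi hy0
      (by linarith [hy.2, Real.pi_pos])
    field_simp
  simp only [eq a ha, eq b hb]
  exact key ha hb hab
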